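/- If ρ : F(Ω) → (−∞, +∞] is a coherent, cash-subadditive risk measure, i.e. it satisfies (a) ρ(cf) = c·ρ(f) for all c > 0, (b) ρ(f + g) ≤ ρ(f) + ρ(g), (c) f ≤ g pointwise implies ρ(f) ≥ ρ(g), and (d) ρ(f + a) ≥ ρ(f) − a for all a ≥ 0, then the functional ρ̂ defined by ρ̂(f) = ρ(f ∧ 0) satisfies (a), (b), (c), (d) and additionally (e) ρ̂(f) = ρ̂(f ∧ 0) for all f; that is, ρ̂ is a coherent, cash-subadditive loss measure. -/
import Mathlib


/-- If `ρ` is a coherent cash-subadditive risk measure with values in `(-∞,+∞]`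
(modelled as `EReal` values different from `⊥`), then `ρ̂(f) = ρ(f ∧ 0)` is a
coherent cash-subadditive loss measure: it satisfies (a)–(d) and also
(e) `ρ̂(f) = ρ̂(f ∧ 0)`. -/
theorem stmt_2 {Ω : Type*} [Nonempty Ω] (ρ : (Ω → ℝ) → EReal)
    (hbot : ∀ f, ρ f ≠ ⊥)
    -- (a) positive homogeneity
    (ha : ∀ c : ℝ, 0 < c → ∀ f, ρ (c • f) = (c : EReal) * ρ f)
    -- (b) subadditivity
    (hb : ∀ f g, ρ (f + g) ≤ ρ f + ρ g)
    -- (c) inverse monotonicity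
    (hc : ∀ f g, f ≤ g → ρ g ≤ ρ f)
    -- (d) cash subadditivity
    (hd : ∀ f, ∀ a : ℝ, 0 ≤ a → ρ f - (a : EReal) ≤ ρ (f + fun _ => a))
    (ρh : (Ω → ℝ) → EReal)
    (hρh : ∀ f, ρh f = ρ fun ω => min (f ω) 0) :
    (∀ f, ρh f ≠ ⊥) ∧
    (∀ c : ℝ, 0 < c → ∀ f, ρh (c • f) = (c : EReal) * ρh f) ∧
    (∀ f g, ρh (f + g) ≤ ρh f + ρh g) ∧
    (∀ f g, f ≤ g → ρh g ≤ ρh f) ∧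
    (∀ f, ∀ a : ℝ, 0 ≤ a → ρh f - (a : EReal) ≤ ρh (f + fun _ => a)) ∧
    (∀ f, ρh f = ρh fun ω => min (f ω) 0) := by
  refine ⟨fun f => ?_, fun c hc0 f => ?_, fun f g => ?_, fun f g hfg => ?_,
    fun f a ha0 => ?_, fun f => ?_⟩
  · rw [hρh]; exact hbot _
  · rw [hρh, hρh]
    have : (fun ω => min ((c • f) ω) 0) = c • (fun ω => min (f ω) 0) := by
      funext ω
      simp only [Pi.smul_apply, smul_eq_mul]
      rw [mul_min_of_nonneg _ _ hc0.le, mul_zero]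
    rw [this, ha c hc0]
  · rw [hρh, hρh, hρh]
    calc ρ (fun ω => min ((f + g) ω) 0)
        ≤ ρ ((fun ω => min (f ω) 0) + fun ω => min (g ω) 0) := by
          apply hc
          intro ω
          simp only [Pi.add_apply]
          exact le_min (add_le_add (min_le_left _ _) (min_le_left _ _))
            (by simpa using add_le_add (min_le_right (f ω) 0) (min_le_right (g ω) 0))
      _ ≤ _ := hb _ _
  · rw [hρh, hρh]
    exact hc _ _ fun ω => min_le_min (hfg ω) le_rfl
  · rw [hρh, hρh]
    refine le_trans (hd _ a ha0) (hc _ _ ?_)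
    intro ω
    simp only [Pi.add_apply]
    calc min (f ω + a) 0 ≤ min (f ω + a) (0 + a) :=
          min_le_min le_rfl (by linarith)
      _ = min (f ω) 0 + a := by rw [min_add_add_right]
  · rw [hρh, hρh]
    congr 1
    funext ω
    simp [min_assoc]
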